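/- Let h : ℝ^M → ℝ be convex and decreasing in each coordinate, and a > 0. Then U(b) = min over the simplex {u ≥ 0, Σuᵢ=1} of h(b·u₁/(b+a), …, b·u_M/(b+a)) is a convex function of b on [0, ∞). -/

import Mathlib

open Finset Set

theorem stmt_11 (M : ℕ) (hM : 1 ≤ M) (h : (Fin M → ℝ) → ℝ) (a : ℝ) (ha : 0 < a)
    (hconv : ConvexOn ℝ Set.univ h)
    (hdec : ∀ x y : Fin M → ℝ, (∀ i, x i ≤ y i) → h y ≤ h x)
    (U : ℝ → ℝ)
    (hU : ∀ b, U b = sInf ((fun u => h (fun i => b * u i / (b + a))) ''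
      {u : Fin M → ℝ | (∀ i, 0 ≤ u i) ∧ ∑ i, u i = 1})) :
    ConvexOn ℝ (Ici 0) U := by
  set Δ : Set (Fin M → ℝ) := {u : Fin M → ℝ | (∀ i, 0 ≤ u i) ∧ ∑ i, u i = 1} with hΔ
  have hMpos : (0:ℝ) < (M:ℝ) := by exact_mod_cast hM
  have hΔne : Δ.Nonempty := by
    refine ⟨fun i => if i = ⟨0, hM⟩ then 1 else 0, fun i => ?_, ?_⟩
    · dsimp; split <;> norm_num
    · simp
  have hBdd : ∀ b' : ℝ, 0 ≤ b' →
      BddBelow ((fun u => h (fun i => b' * u i / (b' + a))) '' Δ) := by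
    intro b' hb'
    refine ⟨h (fun _ => (1:ℝ)), ?_⟩
    rintro p ⟨u, hu, rfl⟩
    refine hdec _ _ (fun i => ?_)
    have h1 : u i ≤ 1 := by
      rw [← hu.2]
      exact Finset.single_le_sum (fun j _ => hu.1 j) (Finset.mem_univ i)
    have hba : (0:ℝ) < b' + a := by linarith
    rw [div_le_one hba]
    nlinarith [mul_nonneg hb' (sub_nonneg.mpr h1)]
  constructor
  · exact convex_Ici 0
  intro b₁ hb₁ b₂ hb₂ l m hl hm hlm
  simp only [smul_eq_mul]
  rw [Set.mem_Ici] at hb₁ hb₂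
  rcases eq_or_lt_of_le hl with rfl | hl
  · simp only [zero_add] at hlm; subst hlm; simp
  rcases eq_or_lt_of_le hm with rfl | hm
  · simp only [add_zero] at hlm; subst hlm; simp
  set b : ℝ := l * b₁ + m * b₂ with hbdef
  have hb : 0 ≤ b := by positivity
  rw [hU, hU, hU]
  rcases eq_or_lt_of_le hb with hb0 | hbpos
  · -- degenerate case b = 0, hence b₁ = b₂ = 0
    have hb1 : b₁ = 0 := by
      have : b₁ ≤ 0 := by nlinarith [mul_nonneg hm.le hb₂]
      linarith
    have hb2 : b₂ = 0 := by
      have : b₂ ≤ 0 := by nlinarith [mul_nonneg hl.le hb₁]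
      linarith
    have hb0' : b = 0 := hb0.symm
    rw [hb1, hb2, hb0']
    have himg : (fun u : Fin M → ℝ => h (fun i => 0 * u i / (0 + a))) '' Δ
        = {h (fun _ => (0:ℝ))} := by
      have he : (fun u : Fin M → ℝ => h (fun i => 0 * u i / (0 + a)))
          = fun _ => h (fun _ => (0:ℝ)) := by
        funext u; congr 1; funext i; rw [zero_mul, zero_div]
      rw [he, Set.Nonempty.image_const hΔne]
    rw [himg, csInf_singleton]
    have : l * h (fun _ => (0:ℝ)) + m * h (fun _ => (0:ℝ)) = h (fun _ => (0:ℝ)) := by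
      rw [← add_mul, hlm, one_mul]
    linarith
  -- main case : b > 0
  have hA : (0:ℝ) < b₁ + a := by linarith
  have hB : (0:ℝ) < b₂ + a := by linarith
  have hba : (0:ℝ) < b + a := by linarith
  have key : ∀ u ∈ Δ, ∀ v ∈ Δ,
      sInf ((fun u => h (fun i => b * u i / (b + a))) '' Δ)
        ≤ l * h (fun i => b₁ * u i / (b₁ + a)) + m * h (fun i => b₂ * v i / (b₂ + a)) := by
    intro u hu v hv
    set x : Fin M → ℝ := fun i => b₁ * u i / (b₁ + a) with hx
    set y : Fin M → ℝ := fun i => b₂ * v i / (b₂ + a) with hy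
    set z : Fin M → ℝ := fun i => l * x i + m * y i with hz
    have hzconv : h z ≤ l * h x + m * h y := by
      have hthis := hconv.2 (Set.mem_univ x) (Set.mem_univ y) hl.le hm.le hlm
      simp only [smul_eq_mul] at hthis
      have hze : z = fun i => l * x i + m * y i := rfl
      have : (fun i => l * x i + m * y i) = (l • x + m • y) := by
        funext i; simp [smul_eq_mul]
      rw [hze, this]
      exact hthis
    set s : ℝ := l * (b₁ / (b₁ + a)) + m * (b₂ / (b₂ + a)) with hs
    set t : ℝ := b / (b + a) with ht
    have hsumx : ∑ i, x i = b₁ / (b₁ + a) := by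
      simp only [hx]
      rw [← Finset.sum_div, ← Finset.mul_sum, hu.2, mul_one]
    have hsumy : ∑ i, y i = b₂ / (b₂ + a) := by
      simp only [hy]
      rw [← Finset.sum_div, ← Finset.mul_sum, hv.2, mul_one]
    have hsumz : ∑ i, z i = s := by
      simp only [hz]
      rw [Finset.sum_add_distrib, ← Finset.mul_sum, ← Finset.mul_sum, hsumx, hsumy]
    have hst : s ≤ t := by
      have hm' : m = 1 - l := by linarith
      have e1 : s = (l * b₁ * (b₂ + a) + m * b₂ * (b₁ + a)) / ((b₁ + a) * (b₂ + a)) := by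
        rw [hs]; field_simp
      rw [e1, ht, div_le_div_iff₀ (by positivity) hba, hbdef, hm']
      nlinarith [mul_nonneg (mul_nonneg (mul_nonneg hl.le (by linarith : (0:ℝ) ≤ 1 - l)) ha.le)
        (sq_nonneg (b₁ - b₂))]
    have htpos : 0 < t := by rw [ht]; positivity
    set d : ℝ := (t - s) / (M : ℝ) with hd
    have hd0 : 0 ≤ d := div_nonneg (by linarith) hMpos.le
    have hz0 : ∀ i, 0 ≤ z i := by
      intro i
      have hxi : 0 ≤ x i := div_nonneg (mul_nonneg hb₁ (hu.1 i)) hA.le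
      have hyi : 0 ≤ y i := div_nonneg (mul_nonneg hb₂ (hv.1 i)) hB.le
      exact add_nonneg (mul_nonneg hl.le hxi) (mul_nonneg hm.le hyi)
    set w : Fin M → ℝ := fun i => (z i + d) * ((b + a) / b) with hw
    have hw0 : ∀ i, 0 ≤ w i := fun i =>
      mul_nonneg (add_nonneg (hz0 i) hd0) (div_nonneg hba.le hbpos.le)
    have hwsum : ∑ i, w i = 1 := by
      simp only [hw]
      rw [← Finset.sum_mul, Finset.sum_add_distrib, hsumz, Finset.sum_const,
        Finset.card_univ, Fintype.card_fin, nsmul_eq_mul, hd]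
      have e2 : s + (M:ℝ) * ((t - s) / (M:ℝ)) = t := by field_simp; ring
      rw [e2, ht]
      field_simp
    have hwmem : w ∈ Δ := ⟨hw0, hwsum⟩
    have hpoint : (fun i => b * w i / (b + a)) = fun i => z i + d := by
      funext i
      simp only [hw]
      field_simp
    calc sInf ((fun u => h (fun i => b * u i / (b + a))) '' Δ)
        ≤ h (fun i => b * w i / (b + a)) := csInf_le (hBdd b hb) ⟨w, hwmem, rfl⟩
      _ = h (fun i => z i + d) := by rw [hpoint]
      _ ≤ h z := hdec z (fun i => z i + d) (fun i => le_add_of_nonneg_right hd0)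
      _ ≤ l * h x + m * h y := hzconv
  have hne1 : ((fun u => h (fun i => b₁ * u i / (b₁ + a))) '' Δ).Nonempty := hΔne.image _
  have hne2 : ((fun u => h (fun i => b₂ * u i / (b₂ + a))) '' Δ).Nonempty := hΔne.image _
  have key2 : ∀ p ∈ (fun u => h (fun i => b₁ * u i / (b₁ + a))) '' Δ,
      ∀ q ∈ (fun u => h (fun i => b₂ * u i / (b₂ + a))) '' Δ,
      sInf ((fun u => h (fun i => b * u i / (b + a))) '' Δ) ≤ l * p + m * q := by
    rintro p ⟨u, hu, rfl⟩ q ⟨v, hv, rfl⟩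
    exact key u hu v hv
  have step2 : ∀ p ∈ (fun u => h (fun i => b₁ * u i / (b₁ + a))) '' Δ,
      sInf ((fun u => h (fun i => b * u i / (b + a))) '' Δ)
        ≤ l * p + m * sInf ((fun u => h (fun i => b₂ * u i / (b₂ + a))) '' Δ) := by
    intro p hp
    have h4 : (sInf ((fun u => h (fun i => b * u i / (b + a))) '' Δ) - l * p) / m
        ≤ sInf ((fun u => h (fun i => b₂ * u i / (b₂ + a))) '' Δ) := by
      refine le_csInf hne2 (fun q hq => ?_)
      rw [div_le_iff₀ hm]
      linarith [key2 p hp q hq]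
    rw [div_le_iff₀ hm] at h4
    linarith
  have h5 : (sInf ((fun u => h (fun i => b * u i / (b + a))) '' Δ)
      - m * sInf ((fun u => h (fun i => b₂ * u i / (b₂ + a))) '' Δ)) / l
      ≤ sInf ((fun u => h (fun i => b₁ * u i / (b₁ + a))) '' Δ) := by
    refine le_csInf hne1 (fun p hp => ?_)
    rw [div_le_iff₀ hl]
    linarith [step2 p hp]
  rw [div_le_iff₀ hl] at h5
  linarith
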